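/- Define the parallelogram Π = {(x,s) : |x − s| ≤ |a/(1−λ) − 1|, |s| ≤ 1}. If either 0 ≤ λ < 1 and β ≤ 0, or −1 < λ ≤ 0 and −1 ≤ β ≤ 0, then Π is invariant under the map f, i.e., f(Π) ⊆ Π. -/

import Mathlib

open Filter Topology

/-- The clipping function Φ. -/
noncomputable def Phi (t : ℝ) : ℝ := if t < -1 then -1 else if t ≤ 1 then t else 1

/-- The map f(x,s) = (λx + a·s, Φ(s + x' − x)). -/
noncomputable def f (lam a : ℝ) (p : ℝ × ℝ) : ℝ × ℝ :=
  (lam * p.1 + a * p.2, Phi (p.2 + (lam * p.1 + a * p.2) - p.1))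

/-- Membership in the strip L = {(x,s) : |s| ≤ 1}. -/
def inL (p : ℝ × ℝ) : Prop := |p.2| ≤ 1

/-- A trajectory of the map f, staying in the strip L. -/
def IsTraj (lam a : ℝ) (z : ℕ → ℝ × ℝ) : Prop :=
  (∀ n, inL (z n)) ∧ ∀ n, z (n + 1) = f lam a (z n)

/-- The set of fixed points of f in the strip L. -/
def fixedSet (lam a : ℝ) : Set (ℝ × ℝ) := {p | inL p ∧ f lam a p = p}

/-- Lyapunov stability of a fixed point. -/
def IsStableFixed (lam a : ℝ) (P : ℝ × ℝ) : Prop :=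
  ∀ ε > 0, ∃ δ > 0, ∀ z : ℕ → ℝ × ℝ, IsTraj lam a z → dist (z 0) P < δ →
    ∀ n, dist (z n) P < ε

/-- Semi-stability of a fixed point. -/
def IsSemiStable (lam a : ℝ) (P : ℝ × ℝ) : Prop :=
  ∃ U₁ U₂ : Set (ℝ × ℝ), IsOpen U₁ ∧ IsOpen U₂ ∧
    U₁ ⊆ {p | |p.2| < 1} ∧ U₂ ⊆ {p | |p.2| < 1} ∧
    P ∈ frontier U₁ ∧ P ∈ frontier U₂ ∧
    (∀ ε > 0, ∃ δ > 0, ∀ z : ℕ → ℝ × ℝ, IsTraj lam a z → z 0 ∈ U₁ →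
      dist (z 0) P < δ → ∀ n, dist (z n) P < ε) ∧
    (∃ ε₀ > 0, ∀ z : ℕ → ℝ × ℝ, IsTraj lam a z → z 0 ∈ U₂ →
      ∃ n, ε₀ ≤ dist (z n) P)

/-- Stability of a set (e.g. a periodic orbit) for the dynamics of f. -/
def IsStableSet (lam a : ℝ) (O : Set (ℝ × ℝ)) : Prop :=
  ∀ ε > 0, ∃ δ > 0, ∀ z : ℕ → ℝ × ℝ, IsTraj lam a z →
    Metric.infDist (z 0) O < δ → ∀ n, Metric.infDist (z n) O < ε

/-- O is a periodic orbit of f. -/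
def IsPeriodicOrbit (lam a : ℝ) (O : Set (ℝ × ℝ)) : Prop :=
  ∃ P : ℝ × ℝ, ∃ m : ℕ, 1 ≤ m ∧ inL P ∧ (f lam a)^[m] P = P ∧
    O = {q | ∃ i < m, (f lam a)^[i] P = q}

/-- P is a periodic point of minimal period k. -/
def HasMinPeriod (lam a : ℝ) (P : ℝ × ℝ) (k : ℕ) : Prop :=
  (f lam a)^[k] P = P ∧ ∀ j, 1 ≤ j → j < k → (f lam a)^[j] P ≠ P

/-- The parallelogram Π. -/
def ParPi (lam a : ℝ) : Set (ℝ × ℝ) :=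
  {p | |p.1 - p.2| ≤ |a / (1 - lam) - 1| ∧ |p.2| ≤ 1}

/-- Lemma 3: for 0 ≤ λ < 1, β ≤ 0, and for −1 < λ ≤ 0, −1 ≤ β ≤ 0, the
parallelogram Π is invariant under f. -/
theorem stmt16 (lam a : ℝ)
    (h : (0 ≤ lam ∧ lam < 1 ∧ lam + a ≤ 0) ∨
         (-1 < lam ∧ lam ≤ 0 ∧ -1 ≤ lam + a ∧ lam + a ≤ 0)) :
    f lam a '' ParPi lam a ⊆ ParPi lam a := by
  have hlam1 : lam < 1 := by rcases h with ⟨_, h2, _⟩ | ⟨_, h2, _⟩ <;> linarith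
  have hb : lam + a ≤ 0 := by rcases h with ⟨_, _, h3⟩ | ⟨_, _, _, h4⟩ <;> linarith
  have hden : (0:ℝ) < 1 - lam := by linarith
  have hcval : |a / (1 - lam) - 1| = (1 - (lam + a)) / (1 - lam) := by
    have h1 : a / (1 - lam) - 1 = ((lam + a) - 1) / (1 - lam) := by
      field_simp
      ring
    rw [h1, abs_div, abs_of_nonpos (by linarith : (lam + a) - 1 ≤ 0),
      abs_of_pos hden]
    congr 1
    ring
  set c : ℝ := (1 - (lam + a)) / (1 - lam) with hc
  have hcden : c * (1 - lam) = 1 - (lam + a) := by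
    rw [hc, div_mul_cancel₀ _ hden.ne']
  have hcnn : 0 ≤ c := div_nonneg (by linarith) (by linarith)
  rintro q ⟨⟨x, s⟩, ⟨hd, hs⟩, rfl⟩
  simp only [ParPi, Set.mem_setOf_eq] at hd hs ⊢
  rw [hcval] at hd ⊢
  rw [abs_le] at hd hs
  obtain ⟨hd1, hd2⟩ := hd
  obtain ⟨hs1, hs2⟩ := hs
  simp only [f, Phi]
  constructor
  · split_ifs with h1 h2
    · -- t < -1, s' = -1
      rw [abs_le]
      constructor <;> rcases h with ⟨hl0, _, _⟩ | ⟨hl1, hl0, hbl, _⟩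
      · nlinarith [mul_nonneg hl0 (by linarith : (0:ℝ) ≤ (x - s) + c),
          mul_nonneg (by linarith : (0:ℝ) ≤ -(lam + a)) (by linarith : (0:ℝ) ≤ 1 - s)]
      · nlinarith [mul_nonneg (by linarith : (0:ℝ) ≤ -lam) (by linarith : (0:ℝ) ≤ c - (x - s)),
          mul_nonneg (by linarith : (0:ℝ) ≤ -(lam + a)) (by linarith : (0:ℝ) ≤ 1 - s),
          mul_nonneg (by linarith : (0:ℝ) ≤ 1 + lam) hcnn]
      · nlinarith [mul_nonneg hl0 (by linarith : (0:ℝ) ≤ c - (x - s)),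
          mul_nonneg (by linarith : (0:ℝ) ≤ -(lam + a)) (by linarith : (0:ℝ) ≤ s + 1)]
      · nlinarith [mul_nonneg (by linarith : (0:ℝ) ≤ -lam)
            (by nlinarith : (0:ℝ) ≤ (1 - lam) * (x - s) - ((lam + a) * s + 1)),
          mul_nonneg (by linarith : (0:ℝ) ≤ -(lam + a)) (by linarith : (0:ℝ) ≤ 1 - s),
          hden]
    · -- middle: s' = s + x' - x
      have heq : lam * x + a * s - (s + (lam * x + a * s) - x) = x - s := by ring
      rw [heq, abs_le]
      exact ⟨hd1, hd2⟩
    · -- t > 1, s' = 1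
      have ht : 1 < s + (lam * x + a * s) - x := not_le.mp h2
      rw [abs_le]
      constructor <;> rcases h with ⟨hl0, _, _⟩ | ⟨hl1, hl0, hbl, _⟩
      · nlinarith [mul_nonneg hl0 (by linarith : (0:ℝ) ≤ (x - s) + c),
          mul_nonneg (by linarith : (0:ℝ) ≤ -(lam + a)) (by linarith : (0:ℝ) ≤ 1 - s)]
      · nlinarith [mul_nonneg (by linarith : (0:ℝ) ≤ -lam)
            (by nlinarith : (0:ℝ) ≤ (lam + a) * s - 1 - (1 - lam) * (x - s)),
          mul_nonneg (by linarith : (0:ℝ) ≤ -(lam + a)) (by linarith : (0:ℝ) ≤ 1 - s),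
          hden]
      · nlinarith [mul_nonneg hl0 (by linarith : (0:ℝ) ≤ c - (x - s)),
          mul_nonneg (by linarith : (0:ℝ) ≤ -(lam + a)) (by linarith : (0:ℝ) ≤ s + 1)]
      · nlinarith [mul_nonneg (by linarith : (0:ℝ) ≤ -lam) (by linarith : (0:ℝ) ≤ (x - s) + c),
          mul_nonneg (by linarith : (0:ℝ) ≤ -(lam + a)) (by linarith : (0:ℝ) ≤ s + 1),
          mul_nonneg (by linarith : (0:ℝ) ≤ 1 + lam) hcnn]
  · split_ifs with h1 h2
    · norm_num
    · rw [abs_le]; constructor <;> linarith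
    · norm_num
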